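/- Let D be an N×N matrix over ZMod 2 and let V, V' be invertible upper-triangular N×N matrices over ZMod 2 such that both R = D·V and R' = D·V' are reduced. Then R and R' have exactly the same pivot pairs: for all i, j, (i,j) is a pivot pair of R if and only if it is a pivot pair of R'. -/

import Mathlib

/-- `i` is the pivot of column `j` of `M`: the largest row index with a nonzero entry.
(Row/column `p : Fin N` corresponds to index `p+1 ∈ {1,…,N}` of the paper.) -/
def IsLow {N : ℕ} (M : Matrix (Fin N) (Fin N) (ZMod 2)) (i j : Fin N) : Prop :=
  M i j ≠ 0 ∧ ∀ i' : Fin N, M i' j ≠ 0 → i' ≤ i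

/-- A matrix is reduced if its nonzero columns have pairwise distinct pivots. -/
def IsReducedMat {N : ℕ} (M : Matrix (Fin N) (Fin N) (ZMod 2)) : Prop :=
  ∀ i j j' : Fin N, IsLow M i j → IsLow M i j' → j = j'

/-- `rankLL M a b` is the rank of the lower-left submatrix `M[≥ a, ≤ b]` formed by the
rows with (1-based) index `≥ a` and the columns with (1-based) index `≤ b`. -/
noncomputable def rankLL {N : ℕ} (M : Matrix (Fin N) (Fin N) (ZMod 2)) (a b : ℕ) : ℕ :=
  (Matrix.of fun (p : {p : Fin N // a ≤ (p : ℕ) + 1}) (q : {q : Fin N // (q : ℕ) + 1 ≤ b}) =>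
    M p.1 q.1).rank

/-- `V` is upper-triangular. -/
def UpperTri {N : ℕ} (V : Matrix (Fin N) (Fin N) (ZMod 2)) : Prop :=
  ∀ a b : Fin N, b < a → V a b = 0

open Finset Matrix

/-- vectors with distinct, nonzero "lows" are linearly independent -/
lemma linIndep_of_low {ι α K : Type*} [Field K] [LinearOrder α]
    (v : ι → α → K) (l : ι → α) (hinj : Function.Injective l)
    (hne : ∀ i, v i (l i) ≠ 0) (hzero : ∀ i a, l i < a → v i a = 0) :
    LinearIndependent K v := by
  classical
  rw [linearIndependent_iff']
  intro s g hsum i hi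
  by_contra hgi
  have hs' : (s.filter fun i => g i ≠ 0).Nonempty := ⟨i, Finset.mem_filter.2 ⟨hi, hgi⟩⟩
  obtain ⟨i0, hi0, hmax⟩ := (s.filter fun i => g i ≠ 0).exists_max_image l hs'
  have hi0s := (Finset.mem_filter.1 hi0).1
  have hgi0 := (Finset.mem_filter.1 hi0).2
  have hh := congrFun hsum (l i0)
  rw [Finset.sum_apply] at hh
  have hsingle : ∑ k ∈ s, (g k • v k) (l i0) = g i0 * v i0 (l i0) := by
    rw [Finset.sum_eq_single i0]
    · simp
    · intro k hk hki0
      by_cases hgk : g k = 0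
      · simp [hgk]
      · have hkf : k ∈ s.filter fun i => g i ≠ 0 := Finset.mem_filter.2 ⟨hk, hgk⟩
        have hle := hmax k hkf
        have hlt : l k < l i0 := lt_of_le_of_ne hle (fun h => hki0 (hinj h))
        simp [hzero k (l i0) hlt]
    · intro h; exact absurd hi0s h
  rw [hsingle] at hh
  have := hh
  simp only [Pi.zero_apply] at this
  exact (mul_ne_zero hgi0 (hne i0)) this

lemma IsLow.unique {N : ℕ} {M : Matrix (Fin N) (Fin N) (ZMod 2)} {i i' j : Fin N}
    (h : IsLow M i j) (h' : IsLow M i' j) : i = i' :=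
  le_antisymm (h'.2 i h.1) (h.2 i' h'.1)

lemma exists_isLow {N : ℕ} {M : Matrix (Fin N) (Fin N) (ZMod 2)} {p j : Fin N}
    (h : M p j ≠ 0) : ∃ i, IsLow M i j ∧ p ≤ i := by
  classical
  obtain ⟨i, hi, hmax⟩ :=
    (Finset.univ.filter fun r => M r j ≠ 0).exists_max_image id ⟨p, by simp [h]⟩
  exact ⟨i, ⟨(Finset.mem_filter.1 hi).2, fun r hr => hmax r (by simp [hr])⟩,
    hmax p (by simp [h])⟩

open Classical in
/-- columns `≤ b` (1-based) whose pivot row is `≥ a` (1-based) -/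
noncomputable def PivCols {N : ℕ} (R : Matrix (Fin N) (Fin N) (ZMod 2)) (a b : ℕ) :
    Finset (Fin N) :=
  Finset.univ.filter fun q => (q : ℕ) + 1 ≤ b ∧ ∃ i : Fin N, a ≤ (i : ℕ) + 1 ∧ IsLow R i q

lemma mem_pivCols {N : ℕ} {R : Matrix (Fin N) (Fin N) (ZMod 2)} {a b : ℕ} {q : Fin N} :
    q ∈ PivCols R a b ↔ (q : ℕ) + 1 ≤ b ∧ ∃ i : Fin N, a ≤ (i : ℕ) + 1 ∧ IsLow R i q := by
  simp [PivCols]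

/-- for a reduced matrix, the lower-left rank counts pivot pairs in the lower-left region -/
lemma rankLL_eq_card {N : ℕ} {R : Matrix (Fin N) (Fin N) (ZMod 2)}
    (hR : IsReducedMat R) (a b : ℕ) : rankLL R a b = (PivCols R a b).card := by
  classical
  set A : Matrix {p : Fin N // a ≤ (p : ℕ) + 1} {q : Fin N // (q : ℕ) + 1 ≤ b} (ZMod 2) :=
    Matrix.of fun p q => R p.1 q.1 with hA
  have hjP : ∀ j : {x : Fin N // x ∈ PivCols R a b},
      ∃ i : Fin N, a ≤ (i : ℕ) + 1 ∧ IsLow R i j.1 := fun j => (mem_pivCols.1 j.2).2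
  choose l0 hl0a hl0low using hjP
  set w : {x : Fin N // x ∈ PivCols R a b} → ({p : Fin N // a ≤ (p : ℕ) + 1} → ZMod 2) :=
    fun j => fun p => R p.1 j.1 with hw
  have hindep : LinearIndependent (ZMod 2) w := by
    apply linIndep_of_low w (fun j => (⟨l0 j, hl0a j⟩ : {p : Fin N // a ≤ (p : ℕ) + 1}))
    · intro j j' h
      have : l0 j = l0 j' := congrArg Subtype.val h
      have := hR (l0 j) j.1 j'.1 (hl0low j) (this ▸ hl0low j')
      exact Subtype.ext this
    · intro j; exact (hl0low j).1
    · intro j p hlt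
      by_contra hne
      exact absurd ((hl0low j).2 p.1 hne) (not_le.2 hlt)
  have hspan : Submodule.span (ZMod 2) (Set.range Aᵀ)
      = Submodule.span (ZMod 2) (Set.range w) := by
    apply le_antisymm
    · rw [← Submodule.span_insert_zero (s := Set.range w)]
      apply Submodule.span_le.2
      rintro _ ⟨q, rfl⟩
      by_cases hq : ∃ i : Fin N, a ≤ (i : ℕ) + 1 ∧ IsLow R i q.1
      · have hqm : q.1 ∈ PivCols R a b := mem_pivCols.2 ⟨q.2, hq⟩
        refine Submodule.subset_span (Set.mem_insert_iff.2 (Or.inr ⟨⟨q.1, hqm⟩, ?_⟩))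
        rfl
      · refine Submodule.subset_span (Set.mem_insert_iff.2 (Or.inl ?_))
        funext p
        by_contra hne
        obtain ⟨i, hlow, hpi⟩ := exists_isLow (M := R) (p := p.1) (j := q.1) hne
        exact hq ⟨i, le_trans p.2 (by have : (p.1:ℕ) ≤ (i:ℕ) := hpi; omega), hlow⟩
    · apply Submodule.span_le.2
      rintro _ ⟨j, rfl⟩
      exact Submodule.subset_span ⟨⟨j.1, (mem_pivCols.1 j.2).1⟩, rfl⟩
  have : rankLL R a b = A.rank := rfl
  rw [this, Matrix.rank_eq_finrank_span_cols]
  change Module.finrank (ZMod 2) (Submodule.span (ZMod 2) (Set.range Aᵀ)) = _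
  rw [hspan, finrank_span_eq_card hindep,
    Fintype.card_coe]

/-- right multiplication by an invertible upper-triangular matrix preserves lower-left ranks -/
lemma rankLL_mul {N : ℕ} (D V : Matrix (Fin N) (Fin N) (ZMod 2))
    (hV : IsUnit V) (hVt : UpperTri V) (a b : ℕ) :
    rankLL (D * V) a b = rankLL D a b := by
  classical
  set A : Matrix {p : Fin N // a ≤ (p : ℕ) + 1} {q : Fin N // (q : ℕ) + 1 ≤ b} (ZMod 2) :=
    Matrix.of fun p q => D p.1 q.1 with hA
  set B : Matrix {q : Fin N // (q : ℕ) + 1 ≤ b} {q : Fin N // (q : ℕ) + 1 ≤ b} (ZMod 2) :=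
    Matrix.of fun q q' => V q.1 q'.1 with hB
  have hdiag : ∀ k : Fin N, V k k ≠ 0 := by
    have hdet : IsUnit V.det := (Matrix.isUnit_iff_isUnit_det V).1 hV
    have htri : V.BlockTriangular id := fun p q h => hVt p q h
    rw [Matrix.det_of_upperTriangular htri] at hdet
    intro k hk
    exact hdet.ne_zero (Finset.prod_eq_zero (f := fun i => V i i) (Finset.mem_univ k) hk)
  have hBdet : IsUnit B.det := by
    have htriB : B.BlockTriangular id := by
      intro q q' h
      exact hVt q.1 q'.1 (by exact_mod_cast h)
    rw [Matrix.det_of_upperTriangular htriB]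
    rw [isUnit_iff_ne_zero, Finset.prod_ne_zero_iff]
    exact fun q _ => hdiag q.1
  have hS : (Matrix.of fun (p : {p : Fin N // a ≤ (p : ℕ) + 1})
      (q : {q : Fin N // (q : ℕ) + 1 ≤ b}) => (D * V) p.1 q.1) = A * B := by
    ext p q'
    show (D * V) p.1 q'.1 = ∑ q : {q : Fin N // (q : ℕ) + 1 ≤ b}, D p.1 q.1 * V q.1 q'.1
    rw [Matrix.mul_apply]
    rw [← Fintype.sum_subtype_add_sum_subtype (fun q : Fin N => (q : ℕ) + 1 ≤ b)
      (fun k => D p.1 k * V k q'.1)]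
    have : ∑ k : {q : Fin N // ¬ ((q : ℕ) + 1 ≤ b)}, D p.1 k.1 * V k.1 q'.1 = 0 := by
      apply Finset.sum_eq_zero
      intro k _
      have hq : (q'.1 : ℕ) < (k.1 : ℕ) := by
        have := k.2
        have := q'.2
        omega
      rw [hVt k.1 q'.1 (by exact_mod_cast hq), mul_zero]
    rw [this, add_zero]
  show (Matrix.of fun (p : {p : Fin N // a ≤ (p : ℕ) + 1})
      (q : {q : Fin N // (q : ℕ) + 1 ≤ b}) => (D * V) p.1 q.1).rank = A.rank
  rw [hS]
  exact Matrix.rank_mul_eq_left_of_isUnit_det B A hBdet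

/-- rank-based characterization of pivot pairs of a reduced matrix -/
lemma isLow_iff_rankLL {N : ℕ} {R : Matrix (Fin N) (Fin N) (ZMod 2)}
    (hR : IsReducedMat R) (i j : Fin N) :
    IsLow R i j ↔ rankLL R ((i : ℕ) + 1) ((j : ℕ) + 1) + rankLL R ((i : ℕ) + 2) (j : ℕ)
      = rankLL R ((i : ℕ) + 2) ((j : ℕ) + 1) + rankLL R ((i : ℕ) + 1) (j : ℕ) + 1 := by
  classical
  rw [rankLL_eq_card hR, rankLL_eq_card hR, rankLL_eq_card hR, rankLL_eq_card hR]
  have hsubU : PivCols R ((i : ℕ) + 2) ((j : ℕ) + 1) ∪ PivCols R ((i : ℕ) + 1) (j : ℕ)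
      ⊆ PivCols R ((i : ℕ) + 1) ((j : ℕ) + 1) := by
    intro q hq
    rcases Finset.mem_union.1 hq with h | h
    · obtain ⟨hb, i', hi', hlow⟩ := mem_pivCols.1 h
      exact mem_pivCols.2 ⟨hb, i', by omega, hlow⟩
    · obtain ⟨hb, i', hi', hlow⟩ := mem_pivCols.1 h
      exact mem_pivCols.2 ⟨by omega, i', hi', hlow⟩
  have hinter : PivCols R ((i : ℕ) + 2) ((j : ℕ) + 1) ∩ PivCols R ((i : ℕ) + 1) (j : ℕ)
      = PivCols R ((i : ℕ) + 2) (j : ℕ) := by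
    ext q
    simp only [Finset.mem_inter, mem_pivCols]
    constructor
    · rintro ⟨⟨hb1, i1, hi1, hlow1⟩, ⟨hb2, i2, hi2, hlow2⟩⟩
      exact ⟨hb2, i1, hi1, hlow1⟩
    · rintro ⟨hb, i1, hi1, hlow1⟩
      exact ⟨⟨by omega, i1, hi1, hlow1⟩, ⟨hb, i1, by omega, hlow1⟩⟩
  have hdiff : ∀ q, q ∈ PivCols R ((i : ℕ) + 1) ((j : ℕ) + 1) \
      (PivCols R ((i : ℕ) + 2) ((j : ℕ) + 1) ∪ PivCols R ((i : ℕ) + 1) (j : ℕ))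
      ↔ (q = j ∧ IsLow R i j) := by
    intro q
    simp only [Finset.mem_sdiff, Finset.mem_union, mem_pivCols, not_or, not_and, not_exists]
    constructor
    · rintro ⟨⟨hb, i1, hi1, hlow1⟩, h21, h12⟩
      have hqj : (q : ℕ) = (j : ℕ) := by
        by_contra hne
        have hq' : (q : ℕ) + 1 ≤ (j : ℕ) := by omega
        exact (h12 hq' i1 hi1) hlow1
      have hq : q = j := Fin.ext hqj
      have hii : (i1 : ℕ) = (i : ℕ) := by
        have h1 := h21 hb i1
        by_cases hc : (i : ℕ) + 2 ≤ (i1 : ℕ) + 1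
        · exact absurd hlow1 (h1 hc)
        · omega
      have hii' : i1 = i := Fin.ext hii
      exact ⟨hq, by rwa [hq, hii'] at hlow1⟩
    · rintro ⟨rfl, hlow⟩
      refine ⟨⟨le_refl _, i, le_refl _, hlow⟩, ?_, ?_⟩
      · intro _ i' hi' hlow'
        have := congrArg Fin.val (hlow.unique hlow')
        omega
      · intro hc
        omega
  have hc1 := Finset.card_sdiff_add_card_eq_card hsubU
  have hc2 := Finset.card_union_add_card_inter
    (PivCols R ((i : ℕ) + 2) ((j : ℕ) + 1)) (PivCols R ((i : ℕ) + 1) (j : ℕ))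
  rw [hinter] at hc2
  constructor
  · intro hlow
    have hset : PivCols R ((i : ℕ) + 1) ((j : ℕ) + 1) \
        (PivCols R ((i : ℕ) + 2) ((j : ℕ) + 1) ∪ PivCols R ((i : ℕ) + 1) (j : ℕ)) = {j} := by
      ext q
      rw [hdiff q, Finset.mem_singleton]
      exact ⟨fun h => h.1, fun h => ⟨h, hlow⟩⟩
    rw [hset] at hc1
    simp only [Finset.card_singleton] at hc1
    omega
  · intro heq
    have hcard : 0 < (PivCols R ((i : ℕ) + 1) ((j : ℕ) + 1) \
        (PivCols R ((i : ℕ) + 2) ((j : ℕ) + 1) ∪ PivCols R ((i : ℕ) + 1) (j : ℕ))).card := by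
      omega
    obtain ⟨q, hq⟩ := Finset.card_pos.1 hcard
    exact ((hdiff q).1 hq).2

/-- Uniqueness of pivot pairs: any two reductions `R = D * V` and `R' = D * V'` of the same
matrix `D` by invertible upper-triangular matrices have exactly the same pivot pairs. -/
theorem pivot_pairs_unique {N : ℕ} (D V V' : Matrix (Fin N) (Fin N) (ZMod 2))
    (hV : IsUnit V) (hVt : UpperTri V) (hRV : IsReducedMat (D * V))
    (hV' : IsUnit V') (hVt' : UpperTri V') (hRV' : IsReducedMat (D * V')) :
    ∀ i j : Fin N, IsLow (D * V) i j ↔ IsLow (D * V') i j := by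
  intro i j
  rw [isLow_iff_rankLL hRV, isLow_iff_rankLL hRV']
  simp only [rankLL_mul D V hV hVt, rankLL_mul D V' hV' hVt']
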